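/- The quantum relative entropy is super-additive with respect to product second arguments: for any bipartite density operator ρ₁₂ on H₁⊗H₂ with marginals ρ₁ = Tr₂ ρ₁₂ and ρ₂ = Tr₁ ρ₁₂, and full-rank states σ₁ on H₁ and σ₂ on H₂, S(ρ₁₂ ‖ σ₁⊗σ₂) ≥ S(ρ₁‖σ₁) + S(ρ₂‖σ₂). -/

import Mathlib

open Matrix
open scoped Kronecker ComplexOrder

noncomputable section

/-- Matrix logarithm via spectral decomposition (0 for non-Hermitian input). -/
def mlog {d : Type*} [Fintype d] [DecidableEq d] (A : Matrix d d ℂ) : Matrix d d ℂ :=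
  if h : A.IsHermitian then
    (h.eigenvectorUnitary : Matrix d d ℂ) *
      Matrix.diagonal (fun i => (Real.log (h.eigenvalues i) : ℂ)) *
      (star (h.eigenvectorUnitary : Matrix d d ℂ))
  else 0

/-- Quantum relative entropy S(ρ‖σ) = Tr(ρ log ρ − ρ log σ). -/
def relEnt {d : Type*} [Fintype d] [DecidableEq d] (ρ σ : Matrix d d ℂ) : ℝ :=
  (Matrix.trace (ρ * mlog ρ - ρ * mlog σ)).re

/-- Von Neumann entropy S(ρ) = −Tr(ρ log ρ). -/
def vnEnt {d : Type*} [Fintype d] [DecidableEq d] (ρ : Matrix d d ℂ) : ℝ :=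
  -(Matrix.trace (ρ * mlog ρ)).re

/-- ρ is a density operator. -/
def IsDensity {d : Type*} [Fintype d] (ρ : Matrix d d ℂ) : Prop :=
  ρ.PosSemidef ∧ ρ.trace = 1

/-- Full-rank density operator. -/
def IsFaithfulState {d : Type*} [Fintype d] (σ : Matrix d d ℂ) : Prop :=
  σ.PosDef ∧ σ.trace = 1

/-- Apply a linear map blockwise (i.e. (id_k ⊗ T)). -/
def blockApply {d e : Type*} [Fintype d] [DecidableEq d] [Fintype e] [DecidableEq e]
    (T : Matrix d d ℂ →ₗ[ℂ] Matrix e e ℂ) {k : Type*}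
    (M : Matrix (k × d) (k × d) ℂ) : Matrix (k × e) (k × e) ℂ :=
  Matrix.of fun p q => T (Matrix.of fun i j => M (p.1, i) (q.1, j)) p.2 q.2

/-- Quantum channel: trace preserving and completely positive. -/
def IsQChannel {d e : Type*} [Fintype d] [DecidableEq d] [Fintype e] [DecidableEq e]
    (T : Matrix d d ℂ →ₗ[ℂ] Matrix e e ℂ) : Prop :=
  (∀ M : Matrix d d ℂ, (T M).trace = M.trace) ∧
  (∀ (k : Type) [Fintype k] [DecidableEq k] (M : Matrix (k × d) (k × d) ℂ),
      M.PosSemidef → (blockApply T M).PosSemidef)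

/-- Gibbs state ω_{β,H} = e^{−βH}/Tr e^{−βH}. -/
def gibbs {d : Type*} [Fintype d] [DecidableEq d] (β : ℝ) (H : Matrix d d ℂ) :
    Matrix d d ℂ :=
  (Matrix.trace (NormedSpace.exp ((-β : ℂ) • H)))⁻¹ • NormedSpace.exp ((-β : ℂ) • H)

/-- Non-equilibrium free energy difference ΔF_β(ρ,H) = (1/β) S(ρ‖ω_{β,H}). -/
def dF {d : Type*} [Fintype d] [DecidableEq d] (β : ℝ) (ρ H : Matrix d d ℂ) : ℝ :=
  (1 / β) * relEnt ρ (gibbs β H)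

/-- Partial trace over the second factor. -/
def ptraceRight {d₁ d₂ : Type*} [Fintype d₂]
    (M : Matrix (d₁ × d₂) (d₁ × d₂) ℂ) : Matrix d₁ d₁ ℂ :=
  Matrix.of fun i j => ∑ k, M (i, k) (j, k)

/-- Partial trace over the first factor. -/
def ptraceLeft {d₁ d₂ : Type*} [Fintype d₁]
    (M : Matrix (d₁ × d₂) (d₁ × d₂) ℂ) : Matrix d₂ d₂ ℂ :=
  Matrix.of fun i j => ∑ k, M (k, i) (k, j)

/-- n-fold tensor power of a matrix. -/
def tpow {d : Type*} [Fintype d] (ρ : Matrix d d ℂ) (n : ℕ) :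
    Matrix (Fin n → d) (Fin n → d) ℂ :=
  Matrix.of fun a b => ∏ i, ρ (a i) (b i)

/-- Tensor product of a finite family of matrices. -/
def tprodFam {k : ℕ} {c : Type*} [Fintype c] (γ : Fin k → Matrix c c ℂ) :
    Matrix (Fin k → c) (Fin k → c) ℂ :=
  Matrix.of fun a b => ∏ i, γ i (a i) (b i)

/-- Single-site marginal at site i of a state on an n-fold tensor product. -/
def marginal {d : Type*} [Fintype d] [DecidableEq d] {n : ℕ}
    (M : Matrix (Fin n → d) (Fin n → d) ℂ) (i : Fin n) : Matrix d d ℂ :=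
  Matrix.of fun a b => ∑ g : {j : Fin n // j ≠ i} → d,
    M (fun j => if h : j = i then a else g ⟨j, h⟩)
      (fun j => if h : j = i then b else g ⟨j, h⟩)

/-- Trace norm of a matrix: sum of singular values. -/
def traceNorm {d : Type*} [Fintype d] [DecidableEq d] (A : Matrix d d ℂ) : ℝ :=
  ∑ i, Real.sqrt ((Matrix.posSemidef_conjTranspose_mul_self A).1.eigenvalues i)


section AuxScalar

/-- per-term Klein inequality -/
lemma term_klein (r c t : ℝ) (hr : 0 ≤ r) (hc : 0 ≤ c) (ht : 0 ≤ t)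
    (hsupp : t = 0 → r * c = 0) :
    r * c * Real.log t ≤ r * c * Real.log r + (c * t - r * c) := by
  rcases eq_or_lt_of_le (mul_nonneg hr hc) with h | h
  · rw [← h]; simp; positivity
  · have hrpos : 0 < r := lt_of_le_of_ne hr (by rintro rfl; simp at h)
    have hcpos : 0 < c := lt_of_le_of_ne hc (by rintro rfl; simp at h)
    have htpos : 0 < t := by
      rcases eq_or_lt_of_le ht with h0 | h0
      · exact absurd (hsupp h0.symm) (ne_of_gt h)
      · exact h0
    have key : Real.log t - Real.log r ≤ t / r - 1 :=
      (Real.log_div (ne_of_gt htpos) (ne_of_gt hrpos)) ▸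
        Real.log_le_sub_one_of_pos (div_pos htpos hrpos)
    nlinarith [mul_le_mul_of_nonneg_left key (le_of_lt h),
      mul_pos hrpos hcpos, (div_mul_cancel₀ t (ne_of_gt hrpos))]

/-- summed Klein inequality -/
lemma sum_klein {K I : Type*} [Fintype K] [Fintype I]
    (r : K → ℝ) (c : K → I → ℝ) (t : I → ℝ)
    (hr : ∀ k, 0 ≤ r k) (hc : ∀ k i, 0 ≤ c k i) (ht : ∀ i, 0 ≤ t i)
    (hrow : ∀ k, ∑ i, c k i = 1) (hcol : ∀ i, ∑ k, c k i = 1)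
    (hsupp : ∀ k i, t i = 0 → r k * c k i = 0)
    (hrsum : ∑ k, r k = 1) (htsum : ∑ i, t i = 1) :
    ∑ k, ∑ i, r k * c k i * Real.log (t i) ≤ ∑ k, r k * Real.log (r k) := by
  have step : ∑ k, ∑ i, r k * c k i * Real.log (t i) ≤
      ∑ k, ∑ i, (r k * c k i * Real.log (r k) + (c k i * t i - r k * c k i)) := by
    refine Finset.sum_le_sum fun k _ => Finset.sum_le_sum fun i _ => ?_
    exact term_klein (r k) (c k i) (t i) (hr k) (hc k i) (ht i) (hsupp k i)
  refine step.trans (le_of_eq ?_)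
  have e1 : ∀ k, ∑ i, (r k * c k i * Real.log (r k) + (c k i * t i - r k * c k i))
      = r k * Real.log (r k) + (∑ i, c k i * t i) - r k := by
    intro k
    rw [Finset.sum_add_distrib, Finset.sum_sub_distrib, ← Finset.mul_sum]
    have : ∑ i, r k * c k i * Real.log (r k) = r k * Real.log (r k) := by
      rw [← Finset.sum_mul, ← Finset.mul_sum, hrow k, mul_one]
    rw [this, hrow k, mul_one]; ring
  simp_rw [e1]
  have h2 : ∑ k, ∑ i, c k i * t i = 1 := by
    rw [Finset.sum_comm]
    simp_rw [← Finset.sum_mul, hcol, one_mul, htsum]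
  rw [Finset.sum_sub_distrib, Finset.sum_add_distrib, hrsum, h2]
  ring

lemma sum3_comm {α β γ : Type*} [Fintype α] [Fintype β] [Fintype γ] (f : α → β → γ → ℂ) :
    ∑ a, ∑ b, ∑ c, f a b c = ∑ b, ∑ c, ∑ a, f a b c := by
  rw [Finset.sum_comm]
  exact Finset.sum_congr rfl fun _ _ => Finset.sum_comm

lemma sum3_comm' {α β γ : Type*} [Fintype α] [Fintype β] [Fintype γ] (f : α → β → γ → ℝ) :
    ∑ a, ∑ b, ∑ c, f a b c = ∑ b, ∑ c, ∑ a, f a b c := by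
  rw [Finset.sum_comm]
  exact Finset.sum_congr rfl fun _ _ => Finset.sum_comm

end AuxScalar

section AuxSpectral

open Polynomial

variable {d : Type*} [Fintype d] [DecidableEq d]

lemma conjPow (U M : Matrix d d ℂ) (hU : star U * U = 1) (n : ℕ) :
    (U * M * star U) ^ n = U * M ^ n * star U ∨ n = 0 := by
  induction n with
  | zero => right; rfl
  | succ n ih =>
    left
    rcases ih with h | h
    · rw [pow_succ, h, pow_succ]
      calc U * M ^ n * star U * (U * M * star U)
          = U * M ^ n * (star U * U) * M * star U := by noncomm_ring
        _ = U * (M ^ n * M) * star U := by rw [hU]; noncomm_ring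
    · subst h; simp [pow_one, pow_zero]

lemma aeval_unitary_conj (U M : Matrix d d ℂ) (hU : star U * U = 1)
    (hU' : U * star U = 1) (p : Polynomial ℂ) :
    aeval (U * M * star U) p = U * (aeval M p) * star U := by
  rw [aeval_eq_sum_range (R := ℂ) (x := U * M * star U) (p := p),
    aeval_eq_sum_range (R := ℂ) (x := M) (p := p)]
  rw [Matrix.mul_sum, Matrix.sum_mul]
  refine Finset.sum_congr rfl fun i _ => ?_
  rcases conjPow U M hU i with h | h
  · rw [h, Matrix.mul_smul, Matrix.smul_mul]
  · subst h
    simp only [pow_zero, Matrix.mul_smul, Matrix.smul_mul, mul_one, hU']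

lemma aeval_diagonal' (g : d → ℂ) (p : Polynomial ℂ) :
    aeval (Matrix.diagonal g) p = Matrix.diagonal (fun i => p.eval (g i)) := by
  rw [aeval_eq_sum_range (R := ℂ)]
  have h : ∀ i : d, p.eval (g i) = ∑ j ∈ Finset.range (p.natDegree + 1), p.coeff j * (g i) ^ j :=
    fun i => eval_eq_sum_range (g i)
  simp_rw [h]
  have : ∀ j : ℕ, p.coeff j • Matrix.diagonal g ^ j
      = Matrix.diagonal (fun i => p.coeff j * g i ^ j) := by
    intro j
    rw [Matrix.diagonal_pow, ← Matrix.diagonal_smul]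
    rfl
  simp_rw [this]
  ext i k
  by_cases hik : i = k
  · subst hik
    rw [Matrix.diagonal_apply_eq, Matrix.sum_apply]
    exact Finset.sum_congr rfl fun j _ => by rw [Matrix.diagonal_apply_eq]
  · rw [Matrix.diagonal_apply_ne _ hik, Matrix.sum_apply]
    exact Finset.sum_eq_zero fun j _ => Matrix.diagonal_apply_ne _ hik

lemma isHermitian_conj_diag (U : Matrix d d ℂ) (f : d → ℝ) :
    (U * Matrix.diagonal (fun i => (f i : ℂ)) * star U).IsHermitian := by
  have hD : (Matrix.diagonal (fun i => (f i : ℂ))).IsHermitian := by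
    rw [Matrix.isHermitian_diagonal_iff]
    intro i
    exact Complex.conj_ofReal (f i)
  have := Matrix.isHermitian_mul_mul_conjTranspose U hD
  simpa [Matrix.star_eq_conjTranspose] using this

lemma mlog_spectral (U : Matrix d d ℂ) (f : d → ℝ) (hU : star U * U = 1)
    (hU' : U * star U = 1) :
    mlog (U * Matrix.diagonal (fun i => (f i : ℂ)) * star U)
      = U * Matrix.diagonal (fun i => (Real.log (f i) : ℂ)) * star U := by
  set A := U * Matrix.diagonal (fun i => (f i : ℂ)) * star U with hAdef
  have hA : A.IsHermitian := isHermitian_conj_diag U f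
  set V : Matrix d d ℂ := (hA.eigenvectorUnitary : Matrix d d ℂ) with hVdef
  have hV : star V * V = 1 := Matrix.mem_unitaryGroup_iff'.mp hA.eigenvectorUnitary.2
  have hV' : V * star V = 1 := Matrix.mem_unitaryGroup_iff.mp hA.eigenvectorUnitary.2
  have hspec : A = V * Matrix.diagonal (fun i => ((hA.eigenvalues i : ℝ) : ℂ)) * star V := by
    convert hA.spectral_theorem using 2
    rw [Unitary.conjStarAlgAut_apply]; rfl
  set S : Finset ℂ :=
    (Finset.univ.image fun i => ((hA.eigenvalues i : ℝ) : ℂ)) ∪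
      (Finset.univ.image fun i => ((f i : ℝ) : ℂ)) with hSdef
  set val : ℂ → ℂ := fun z => ((Real.log z.re : ℝ) : ℂ) with hvaldef
  set p : Polynomial ℂ := Lagrange.interpolate S id val with hpdef
  have hinj : Set.InjOn id (S : Set ℂ) := Function.injective_id.injOn
  have hval : ∀ x ∈ S, p.eval x = val x := by
    intro x hx
    have := Lagrange.eval_interpolate_at_node val hinj hx
    exact this
  have E1 : aeval A p = U * Matrix.diagonal (fun i => p.eval ((f i : ℂ))) * star U := by
    rw [hAdef, aeval_unitary_conj U _ hU hU', aeval_diagonal']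
  have E2 : aeval A p
      = V * Matrix.diagonal (fun i => p.eval ((hA.eigenvalues i : ℂ))) * star V := by
    conv_lhs => rw [hspec]
    rw [aeval_unitary_conj V _ hV hV', aeval_diagonal']
  have hf : ∀ i, p.eval ((f i : ℂ)) = ((Real.log (f i) : ℝ) : ℂ) := by
    intro i
    rw [hval _ (Finset.mem_union_right _ (Finset.mem_image_of_mem _ (Finset.mem_univ i)))]
    simp [hvaldef]
  have hr : ∀ i, p.eval ((hA.eigenvalues i : ℂ)) = ((Real.log (hA.eigenvalues i) : ℝ) : ℂ) := by
    intro i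
    rw [hval _ (Finset.mem_union_left _ (Finset.mem_image_of_mem _ (Finset.mem_univ i)))]
    simp [hvaldef]
  have hmlog : mlog A
      = V * Matrix.diagonal (fun i => (Real.log (hA.eigenvalues i) : ℂ)) * star V := by
    rw [mlog, dif_pos hA]
  rw [hmlog]
  simp_rw [← hr, ← E2, E1, hf]

lemma trace_mul_mlog (A : Matrix d d ℂ) (hA : A.IsHermitian) :
    (Matrix.trace (A * mlog A)).re
      = ∑ i, hA.eigenvalues i * Real.log (hA.eigenvalues i) := by
  set U : Matrix d d ℂ := (hA.eigenvectorUnitary : Matrix d d ℂ) with hUdef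
  have hU : star U * U = 1 := Matrix.mem_unitaryGroup_iff'.mp hA.eigenvectorUnitary.2
  set D := Matrix.diagonal (fun i => ((hA.eigenvalues i : ℝ) : ℂ)) with hDdef
  set L := Matrix.diagonal (fun i => ((Real.log (hA.eigenvalues i) : ℝ) : ℂ)) with hLdef
  have hmlog : mlog A = U * L * star U := by rw [mlog, dif_pos hA]
  have hspec : A = U * D * star U := by
    convert hA.spectral_theorem using 2
    rw [Unitary.conjStarAlgAut_apply]; rfl
  have key : A * mlog A = U * (D * L) * star U := by
    rw [hmlog]
    conv_lhs => rw [hspec]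
    calc U * D * star U * (U * L * star U)
        = U * D * (star U * U) * L * star U := by noncomm_ring
      _ = U * (D * L) * star U := by rw [hU]; noncomm_ring
  rw [key, Matrix.trace_mul_cycle, ← mul_assoc, hU, one_mul, hDdef, hLdef,
    Matrix.diagonal_mul_diagonal, Matrix.trace_diagonal]
  rw [Complex.re_sum]
  exact Finset.sum_congr rfl fun i _ => by
    rw [← Complex.ofReal_mul, Complex.ofReal_re]

lemma trace_eq_sum_eigen (A : Matrix d d ℂ) (hA : A.IsHermitian) :
    Matrix.trace A = ∑ i, ((hA.eigenvalues i : ℝ) : ℂ) := by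
  set U : Matrix d d ℂ := (hA.eigenvectorUnitary : Matrix d d ℂ) with hUdef
  have hU : star U * U = 1 := Matrix.mem_unitaryGroup_iff'.mp hA.eigenvectorUnitary.2
  have hspec : A = U * Matrix.diagonal (fun i => ((hA.eigenvalues i : ℝ) : ℂ)) * star U := by
    convert hA.spectral_theorem using 2
    rw [Unitary.conjStarAlgAut_apply]; rfl
  conv_lhs => rw [hspec]
  rw [Matrix.trace_mul_cycle, hU, one_mul, Matrix.trace_diagonal]

end AuxSpectral

section AuxKron

variable {d₁ d₂ : Type} [Fintype d₁] [DecidableEq d₁] [Fintype d₂] [DecidableEq d₂]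

lemma kron_conjTranspose (A : Matrix d₁ d₁ ℂ) (B : Matrix d₂ d₂ ℂ) :
    (A ⊗ₖ B)ᴴ = Aᴴ ⊗ₖ Bᴴ := by
  ext ⟨i, j⟩ ⟨k, l⟩
  simp [Matrix.conjTranspose_apply, Matrix.kroneckerMap_apply]

lemma kron_unitary {U₁ : Matrix d₁ d₁ ℂ} {U₂ : Matrix d₂ d₂ ℂ} (h1 : star U₁ * U₁ = 1)
    (h2 : star U₂ * U₂ = 1) : star (U₁ ⊗ₖ U₂) * (U₁ ⊗ₖ U₂) = 1 := by
  rw [Matrix.star_eq_conjTranspose, kron_conjTranspose, ← Matrix.mul_kronecker_mul,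
    ← Matrix.star_eq_conjTranspose, ← Matrix.star_eq_conjTranspose, h1, h2,
    Matrix.one_kronecker_one]

lemma kron_unitary' {U₁ : Matrix d₁ d₁ ℂ} {U₂ : Matrix d₂ d₂ ℂ} (h1 : U₁ * star U₁ = 1)
    (h2 : U₂ * star U₂ = 1) : (U₁ ⊗ₖ U₂) * star (U₁ ⊗ₖ U₂) = 1 := by
  rw [Matrix.star_eq_conjTranspose, kron_conjTranspose, ← Matrix.mul_kronecker_mul,
    ← Matrix.star_eq_conjTranspose, ← Matrix.star_eq_conjTranspose, h1, h2,
    Matrix.one_kronecker_one]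

lemma mlog_kron (σ₁ : Matrix d₁ d₁ ℂ) (σ₂ : Matrix d₂ d₂ ℂ)
    (h1 : σ₁.PosDef) (h2 : σ₂.PosDef) :
    mlog (σ₁ ⊗ₖ σ₂) = (mlog σ₁) ⊗ₖ (1 : Matrix d₂ d₂ ℂ)
      + (1 : Matrix d₁ d₁ ℂ) ⊗ₖ (mlog σ₂) := by
  set U₁ : Matrix d₁ d₁ ℂ := (h1.1.eigenvectorUnitary : Matrix d₁ d₁ ℂ) with hU₁def
  set U₂ : Matrix d₂ d₂ ℂ := (h2.1.eigenvectorUnitary : Matrix d₂ d₂ ℂ) with hU₂def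
  have hU₁ : star U₁ * U₁ = 1 := Matrix.mem_unitaryGroup_iff'.mp h1.1.eigenvectorUnitary.2
  have hU₁' : U₁ * star U₁ = 1 := Matrix.mem_unitaryGroup_iff.mp h1.1.eigenvectorUnitary.2
  have hU₂ : star U₂ * U₂ = 1 := Matrix.mem_unitaryGroup_iff'.mp h2.1.eigenvectorUnitary.2
  have hU₂' : U₂ * star U₂ = 1 := Matrix.mem_unitaryGroup_iff.mp h2.1.eigenvectorUnitary.2
  set lam := h1.1.eigenvalues with hlam
  set mu := h2.1.eigenvalues with hmu
  have hspec1 : σ₁ = U₁ * Matrix.diagonal (fun i => ((lam i : ℝ) : ℂ)) * star U₁ := by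
    convert h1.1.spectral_theorem using 2
    rw [Unitary.conjStarAlgAut_apply]; rfl
  have hspec2 : σ₂ = U₂ * Matrix.diagonal (fun i => ((mu i : ℝ) : ℂ)) * star U₂ := by
    convert h2.1.spectral_theorem using 2
    rw [Unitary.conjStarAlgAut_apply]; rfl
  set W : Matrix (d₁ × d₂) (d₁ × d₂) ℂ := U₁ ⊗ₖ U₂ with hWdef
  have hW : star W * W = 1 := kron_unitary hU₁ hU₂
  have hW' : W * star W = 1 := kron_unitary' hU₁' hU₂'
  have hstarW : star W = star U₁ ⊗ₖ star U₂ := by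
    rw [hWdef, Matrix.star_eq_conjTranspose, kron_conjTranspose,
      ← Matrix.star_eq_conjTranspose, ← Matrix.star_eq_conjTranspose]
  have hkron : σ₁ ⊗ₖ σ₂
      = W * Matrix.diagonal (fun p : d₁ × d₂ => ((lam p.1 * mu p.2 : ℝ) : ℂ)) * star W := by
    conv_lhs => rw [hspec1, hspec2]
    rw [Matrix.mul_kronecker_mul, Matrix.mul_kronecker_mul, hstarW,
      Matrix.diagonal_kronecker_diagonal]
    congr 2
    funext p
    push_cast
    rfl
  rw [hkron, mlog_spectral W _ hW hW']
  have hlog : (fun p : d₁ × d₂ => ((Real.log (lam p.1 * mu p.2) : ℝ) : ℂ))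
      = fun p : d₁ × d₂ => ((Real.log (lam p.1) : ℂ) + (Real.log (mu p.2) : ℂ)) := by
    funext p
    rw [Real.log_mul (ne_of_gt (h1.eigenvalues_pos p.1)) (ne_of_gt (h2.eigenvalues_pos p.2))]
    push_cast
    rfl
  rw [hlog]
  have hdiagsplit : Matrix.diagonal (fun p : d₁ × d₂ =>
        ((Real.log (lam p.1) : ℂ) + (Real.log (mu p.2) : ℂ)))
      = (Matrix.diagonal fun i => (Real.log (lam i) : ℂ)) ⊗ₖ (1 : Matrix d₂ d₂ ℂ)
        + (1 : Matrix d₁ d₁ ℂ) ⊗ₖ (Matrix.diagonal fun j => (Real.log (mu j) : ℂ)) := by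
    rw [← Matrix.diagonal_one, ← Matrix.diagonal_one, Matrix.diagonal_kronecker_diagonal,
      Matrix.diagonal_kronecker_diagonal, Matrix.diagonal_add]
    congr 1
    funext p
    simp
  rw [hdiagsplit, Matrix.mul_add, Matrix.add_mul]
  congr 1
  · rw [hstarW, hWdef, ← Matrix.mul_kronecker_mul, ← Matrix.mul_kronecker_mul]
    have : mlog σ₁ = U₁ * Matrix.diagonal (fun i => (Real.log (lam i) : ℂ)) * star U₁ := by
      rw [mlog, dif_pos h1.1]
    rw [this, Matrix.mul_one, hU₂']
  · rw [hstarW, hWdef, ← Matrix.mul_kronecker_mul, ← Matrix.mul_kronecker_mul]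
    have : mlog σ₂ = U₂ * Matrix.diagonal (fun j => (Real.log (mu j) : ℂ)) * star U₂ := by
      rw [mlog, dif_pos h2.1]
    rw [this, Matrix.mul_one, hU₁']

end AuxKron

section AuxPtrace

variable {d₁ d₂ : Type} [Fintype d₁] [DecidableEq d₁] [Fintype d₂] [DecidableEq d₂]

lemma ptraceLeft_eq_ptraceRight (M : Matrix (d₁ × d₂) (d₁ × d₂) ℂ) :
    ptraceLeft M = ptraceRight (M.submatrix Prod.swap Prod.swap) := by
  ext i j
  rfl

lemma trace_mul_kron_one_right (M : Matrix (d₁ × d₂) (d₁ × d₂) ℂ) (A : Matrix d₁ d₁ ℂ) :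
    Matrix.trace (M * (A ⊗ₖ (1 : Matrix d₂ d₂ ℂ))) = Matrix.trace (ptraceRight M * A) := by
  simp only [Matrix.trace, Matrix.diag, Matrix.mul_apply, ptraceRight, Matrix.of_apply,
    Fintype.sum_prod_type, Matrix.kroneckerMap_apply, Matrix.one_apply, mul_ite, mul_one,
    mul_zero, Finset.sum_ite_eq', Finset.mem_univ, if_true, Finset.sum_mul]
  refine Finset.sum_congr rfl fun i _ => Finset.sum_comm

lemma trace_mul_kron_one_left (M : Matrix (d₁ × d₂) (d₁ × d₂) ℂ) (B : Matrix d₂ d₂ ℂ) :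
    Matrix.trace (M * ((1 : Matrix d₁ d₁ ℂ) ⊗ₖ B)) = Matrix.trace (ptraceLeft M * B) := by
  simp only [Matrix.trace, Matrix.diag, Matrix.mul_apply, ptraceLeft, Matrix.of_apply,
    Fintype.sum_prod_type, Matrix.kroneckerMap_apply, Matrix.one_apply, ite_mul, one_mul,
    zero_mul, mul_ite, mul_zero, Finset.sum_mul]
  have collapse : ∀ (x : d₁) (x₁ : d₂),
      ∑ x₂ : d₁, ∑ x₃ : d₂, (if x₂ = x then M (x, x₁) (x₂, x₃) * B x₃ x₁ else 0)
        = ∑ x₃ : d₂, M (x, x₁) (x, x₃) * B x₃ x₁ := by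
    intro x x₁
    rw [Finset.sum_comm]
    simp
  simp only [collapse]
  exact sum3_comm _

lemma ptraceRight_isHermitian {M : Matrix (d₁ × d₂) (d₁ × d₂) ℂ} (h : M.IsHermitian) :
    (ptraceRight M).IsHermitian := by
  ext i j
  simp only [Matrix.conjTranspose_apply, ptraceRight, Matrix.of_apply, star_sum]
  exact Finset.sum_congr rfl fun k _ =>
    by simpa [Matrix.conjTranspose_apply] using congrFun (congrFun h (i, k)) (j, k)

lemma ptraceLeft_isHermitian {M : Matrix (d₁ × d₂) (d₁ × d₂) ℂ} (h : M.IsHermitian) :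
    (ptraceLeft M).IsHermitian := by
  ext i j
  simp only [Matrix.conjTranspose_apply, ptraceLeft, Matrix.of_apply, star_sum]
  exact Finset.sum_congr rfl fun k _ =>
    by simpa [Matrix.conjTranspose_apply] using congrFun (congrFun h (k, i)) (k, j)

lemma ptraceRight_posSemidef {M : Matrix (d₁ × d₂) (d₁ × d₂) ℂ} (h : M.PosSemidef) :
    (ptraceRight M).PosSemidef := by
  refine .of_dotProduct_mulVec_nonneg (ptraceRight_isHermitian h.1) fun x => ?_
  have key : dotProduct (star x) (ptraceRight M *ᵥ x)
      = ∑ k : d₂, dotProduct (star (fun pq : d₁ × d₂ => if pq.2 = k then x pq.1 else 0))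
          (M *ᵥ (fun pq : d₁ × d₂ => if pq.2 = k then x pq.1 else 0)) := by
    simp only [dotProduct, Matrix.mulVec, Pi.star_apply, ptraceRight, Matrix.of_apply,
      dotProduct, Fintype.sum_prod_type, apply_ite (star : ℂ → ℂ), star_zero, ite_mul,
      zero_mul, mul_ite, mul_zero, Finset.sum_ite_eq', Finset.mem_univ, if_true,
      Finset.sum_mul, Finset.mul_sum]
    have collapse : ∀ (x₁ : d₂) (x₂ : d₁),
        ∑ x₃ : d₂, ∑ x₄ : d₁,
          (if x₃ = x₁ then star (x x₂) * (M (x₂, x₃) (x₄, x₁) * x x₄) else 0)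
        = ∑ x₄ : d₁, star (x x₂) * (M (x₂, x₁) (x₄, x₁) * x x₄) := by
      intro x₁ x₂
      rw [Finset.sum_comm]
      simp
    simp only [collapse]
    exact (sum3_comm (fun (a b : d₁) (c : d₂) => star (x a) * (M (a, c) (b, c) * x b))).trans
      (sum3_comm (fun (b : d₁) (c : d₂) (a : d₁) => star (x a) * (M (a, c) (b, c) * x b)))
  rw [key]
  exact Finset.sum_nonneg fun k _ => h.dotProduct_mulVec_nonneg _

lemma ptraceLeft_posSemidef {M : Matrix (d₁ × d₂) (d₁ × d₂) ℂ} (h : M.PosSemidef) :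
    (ptraceLeft M).PosSemidef := by
  rw [ptraceLeft_eq_ptraceRight]
  exact ptraceRight_posSemidef (h.submatrix Prod.swap)

lemma ptraceRight_trace (M : Matrix (d₁ × d₂) (d₁ × d₂) ℂ) :
    Matrix.trace (ptraceRight M) = Matrix.trace M := by
  simp [Matrix.trace, Matrix.diag, ptraceRight, Fintype.sum_prod_type]

lemma ptraceLeft_trace (M : Matrix (d₁ × d₂) (d₁ × d₂) ℂ) :
    Matrix.trace (ptraceLeft M) = Matrix.trace M := by
  simp only [Matrix.trace, Matrix.diag, ptraceLeft, Matrix.of_apply, Fintype.sum_prod_type]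
  exact Finset.sum_comm

lemma trace_pick {e : Type*} [Fintype e] [DecidableEq e] (M : Matrix e e ℂ) (v : e → ℂ) :
    Matrix.trace (M * Matrix.diagonal v) = ∑ q, M q q * v q := by
  simp [Matrix.trace, Matrix.diag, Matrix.mul_diagonal]

end AuxPtrace

theorem relEnt_superadditive
    {d₁ d₂ : Type} [Fintype d₁] [DecidableEq d₁] [Fintype d₂] [DecidableEq d₂]
    (ρ₁₂ : Matrix (d₁ × d₂) (d₁ × d₂) ℂ) (hρ₁₂ : IsDensity ρ₁₂)
    (σ₁ : Matrix d₁ d₁ ℂ) (σ₂ : Matrix d₂ d₂ ℂ)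
    (hσ₁ : IsFaithfulState σ₁) (hσ₂ : IsFaithfulState σ₂) :
    relEnt (ptraceRight ρ₁₂) σ₁ + relEnt (ptraceLeft ρ₁₂) σ₂ ≤
      relEnt ρ₁₂ (σ₁ ⊗ₖ σ₂) := by
  classical
  obtain ⟨hpsd, htr⟩ := hρ₁₂
  have h12 : ρ₁₂.IsHermitian := hpsd.1
  have h1psd : (ptraceRight ρ₁₂).PosSemidef := ptraceRight_posSemidef hpsd
  have h2psd : (ptraceLeft ρ₁₂).PosSemidef := ptraceLeft_posSemidef hpsd
  have h1 : (ptraceRight ρ₁₂).IsHermitian := h1psd.1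
  have h2 : (ptraceLeft ρ₁₂).IsHermitian := h2psd.1
  have reduce : relEnt ρ₁₂ (σ₁ ⊗ₖ σ₂)
      = (Matrix.trace (ρ₁₂ * mlog ρ₁₂)).re
        - (Matrix.trace (ptraceRight ρ₁₂ * mlog σ₁)).re
        - (Matrix.trace (ptraceLeft ρ₁₂ * mlog σ₂)).re := by
    rw [relEnt, Matrix.trace_sub, Complex.sub_re, mlog_kron σ₁ σ₂ hσ₁.1 hσ₂.1,
      Matrix.mul_add, Matrix.trace_add, trace_mul_kron_one_right, trace_mul_kron_one_left,
      Complex.add_re]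
    ring
  rw [reduce, relEnt, relEnt, Matrix.trace_sub, Matrix.trace_sub, Complex.sub_re,
    Complex.sub_re]
  have main : (Matrix.trace (ptraceRight ρ₁₂ * mlog (ptraceRight ρ₁₂))).re
      + (Matrix.trace (ptraceLeft ρ₁₂ * mlog (ptraceLeft ρ₁₂))).re
      ≤ (Matrix.trace (ρ₁₂ * mlog ρ₁₂)).re := by
    -- spectral data
    set lam := h1.eigenvalues with hlamdef
    set mu := h2.eigenvalues with hmudef
    set r := h12.eigenvalues with hrdef
    set U₁ : Matrix d₁ d₁ ℂ := (h1.eigenvectorUnitary : Matrix d₁ d₁ ℂ) with hU₁def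
    set U₂ : Matrix d₂ d₂ ℂ := (h2.eigenvectorUnitary : Matrix d₂ d₂ ℂ) with hU₂def
    set V : Matrix (d₁ × d₂) (d₁ × d₂) ℂ :=
      (h12.eigenvectorUnitary : Matrix (d₁ × d₂) (d₁ × d₂) ℂ) with hVdef
    have hU₁u : star U₁ * U₁ = 1 := Matrix.mem_unitaryGroup_iff'.mp h1.eigenvectorUnitary.2
    have hU₁u' : U₁ * star U₁ = 1 := Matrix.mem_unitaryGroup_iff.mp h1.eigenvectorUnitary.2
    have hU₂u : star U₂ * U₂ = 1 := Matrix.mem_unitaryGroup_iff'.mp h2.eigenvectorUnitary.2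
    have hU₂u' : U₂ * star U₂ = 1 := Matrix.mem_unitaryGroup_iff.mp h2.eigenvectorUnitary.2
    have hVu : star V * V = 1 := Matrix.mem_unitaryGroup_iff'.mp h12.eigenvectorUnitary.2
    have hVu' : V * star V = 1 := Matrix.mem_unitaryGroup_iff.mp h12.eigenvectorUnitary.2
    set W : Matrix (d₁ × d₂) (d₁ × d₂) ℂ := U₁ ⊗ₖ U₂ with hWdef
    have hWu : star W * W = 1 := kron_unitary hU₁u hU₂u
    have hWu' : W * star W = 1 := kron_unitary' hU₁u' hU₂u'
    have hspec12 : ρ₁₂ = V * Matrix.diagonal (fun k => ((r k : ℝ) : ℂ)) * star V := by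
      convert h12.spectral_theorem using 2
      rw [Unitary.conjStarAlgAut_apply]; rfl
    set T : Matrix (d₁ × d₂) (d₁ × d₂) ℂ := star V * W with hTdef
    have hstarT : star T = star W * V := by
      rw [hTdef, StarMul.star_mul, star_star]
    have hTu : star T * T = 1 := by
      rw [hstarT, hTdef]
      calc star W * V * (star V * W) = star W * (V * star V) * W := by noncomm_ring
        _ = 1 := by rw [hVu', Matrix.mul_one, hWu]
    have hTu' : T * star T = 1 := by
      rw [hstarT, hTdef]
      calc star V * W * (star W * V) = star V * (W * star W) * V := by noncomm_ring
        _ = 1 := by rw [hWu', Matrix.mul_one, hVu]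
    set c : (d₁ × d₂) → (d₁ × d₂) → ℝ := fun k q => Complex.normSq (T k q) with hcdef
    set B : Matrix (d₁ × d₂) (d₁ × d₂) ℂ := star W * ρ₁₂ * W with hBdef
    have hB : B = star T * Matrix.diagonal (fun k => ((r k : ℝ) : ℂ)) * T := by
      rw [hstarT, hTdef, hBdef]
      conv_lhs => rw [hspec12]
      noncomm_ring
    have hBqq : ∀ q, B q q = ((∑ k, r k * c k q : ℝ) : ℂ) := by
      intro q
      rw [hB, Matrix.mul_apply, Complex.ofReal_sum]
      refine Finset.sum_congr rfl fun k _ => ?_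
      rw [Matrix.mul_diagonal, Matrix.star_apply, Complex.ofReal_mul]
      have hns : star (T k q) * T k q = (Complex.normSq (T k q) : ℂ) := by
        rw [Complex.star_def, ← Complex.normSq_eq_conj_mul_self]
      calc star (T k q) * ((r k : ℝ) : ℂ) * T k q
          = ((r k : ℝ) : ℂ) * (star (T k q) * T k q) := by ring
        _ = ((r k : ℝ) : ℂ) * ((Complex.normSq (T k q) : ℝ) : ℂ) := by rw [hns]
    have hrow : ∀ k, ∑ q, c k q = 1 := by
      intro k
      have h := congrFun (congrFun hTu' k) k
      rw [Matrix.mul_apply] at h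
      have h1' : ∀ q, T k q * (star T) q k = ((Complex.normSq (T k q) : ℝ) : ℂ) := by
        intro q
        rw [Matrix.star_apply, Complex.star_def, Complex.mul_conj]
      rw [Finset.sum_congr rfl (fun q _ => h1' q), Matrix.one_apply_eq] at h
      have h2' := congrArg Complex.re h
      rw [Complex.re_sum] at h2'
      simpa using h2'
    have hcol : ∀ q, ∑ k, c k q = 1 := by
      intro q
      have h := congrFun (congrFun hTu q) q
      rw [Matrix.mul_apply] at h
      have h1' : ∀ k, (star T) q k * T k q = ((Complex.normSq (T k q) : ℝ) : ℂ) := by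
        intro k
        rw [Matrix.star_apply, Complex.star_def, ← Complex.normSq_eq_conj_mul_self]
      rw [Finset.sum_congr rfl (fun k _ => h1' k), Matrix.one_apply_eq] at h
      have h2' := congrArg Complex.re h
      rw [Complex.re_sum] at h2'
      simpa using h2'
    have cyc : ∀ X : Matrix (d₁ × d₂) (d₁ × d₂) ℂ,
        Matrix.trace (B * X) = Matrix.trace (ρ₁₂ * (W * X * star W)) := by
      intro X
      rw [hBdef, show star W * ρ₁₂ * W * X = star W * (ρ₁₂ * (W * X)) by noncomm_ring,
        Matrix.trace_mul_comm,
        show ρ₁₂ * (W * X) * star W = ρ₁₂ * (W * X * star W) by noncomm_ring]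
    have hstarW : star W = star U₁ ⊗ₖ star U₂ := by
      rw [hWdef, Matrix.star_eq_conjTranspose, kron_conjTranspose,
        ← Matrix.star_eq_conjTranspose, ← Matrix.star_eq_conjTranspose]
    have hdiag1 : star U₁ * ptraceRight ρ₁₂ * U₁
        = Matrix.diagonal (fun p => ((lam p : ℝ) : ℂ)) := by
      have := h1.conjStarAlgAut_star_eigenvectorUnitary
      rw [Unitary.conjStarAlgAut_apply, Unitary.coe_star, star_star] at this
      exact this
    have hdiag2 : star U₂ * ptraceLeft ρ₁₂ * U₂
        = Matrix.diagonal (fun p => ((mu p : ℝ) : ℂ)) := by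
      have := h2.conjStarAlgAut_star_eigenvectorUnitary
      rw [Unitary.conjStarAlgAut_apply, Unitary.coe_star, star_star] at this
      exact this
    have key1 : ∀ i : d₁, ∑ j : d₂, B (i, j) (i, j) = ((lam i : ℝ) : ℂ) := by
      intro i
      set P : Matrix d₁ d₁ ℂ := Matrix.diagonal (fun p => if p = i then (1 : ℂ) else 0) with hP
      have hPkron : P ⊗ₖ (1 : Matrix d₂ d₂ ℂ)
          = Matrix.diagonal (fun q : d₁ × d₂ => if q.1 = i then (1 : ℂ) else 0) := by
        rw [hP, ← Matrix.diagonal_one, Matrix.diagonal_kronecker_diagonal]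
        congr 1
        funext q
        by_cases hq : q.1 = i <;> simp [hq]
      have e1 : Matrix.trace (B * (P ⊗ₖ (1 : Matrix d₂ d₂ ℂ))) = ∑ j : d₂, B (i, j) (i, j) := by
        rw [hPkron, trace_pick]
        simp only [Fintype.sum_prod_type, mul_ite, mul_one, mul_zero]
        rw [Finset.sum_comm]
        simp
      have hconj : W * (P ⊗ₖ (1 : Matrix d₂ d₂ ℂ)) * star W
          = (U₁ * P * star U₁) ⊗ₖ (1 : Matrix d₂ d₂ ℂ) := by
        rw [hWdef, hstarW, ← Matrix.mul_kronecker_mul, ← Matrix.mul_kronecker_mul,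
          Matrix.mul_one, hU₂u']
      have e2 : Matrix.trace (B * (P ⊗ₖ (1 : Matrix d₂ d₂ ℂ)))
          = Matrix.trace (ptraceRight ρ₁₂ * (U₁ * P * star U₁)) := by
        rw [cyc, hconj, trace_mul_kron_one_right]
      have e3 : Matrix.trace (ptraceRight ρ₁₂ * (U₁ * P * star U₁)) = ((lam i : ℝ) : ℂ) := by
        rw [show ptraceRight ρ₁₂ * (U₁ * P * star U₁)
            = (ptraceRight ρ₁₂ * U₁ * P) * star U₁ by noncomm_ring,
          Matrix.trace_mul_comm,
          show star U₁ * (ptraceRight ρ₁₂ * U₁ * P)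
            = (star U₁ * ptraceRight ρ₁₂ * U₁) * P by noncomm_ring,
          hdiag1, hP, Matrix.diagonal_mul_diagonal, Matrix.trace_diagonal]
        simp
      rw [← e1, e2, e3]
    have key2 : ∀ j : d₂, ∑ i : d₁, B (i, j) (i, j) = ((mu j : ℝ) : ℂ) := by
      intro j
      set Q : Matrix d₂ d₂ ℂ := Matrix.diagonal (fun l => if l = j then (1 : ℂ) else 0) with hQ
      have hQkron : (1 : Matrix d₁ d₁ ℂ) ⊗ₖ Q
          = Matrix.diagonal (fun q : d₁ × d₂ => if q.2 = j then (1 : ℂ) else 0) := by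
        rw [hQ, ← Matrix.diagonal_one, Matrix.diagonal_kronecker_diagonal]
        congr 1
        funext q
        by_cases hq : q.2 = j <;> simp [hq]
      have e1 : Matrix.trace (B * ((1 : Matrix d₁ d₁ ℂ) ⊗ₖ Q)) = ∑ i : d₁, B (i, j) (i, j) := by
        rw [hQkron, trace_pick]
        simp only [Fintype.sum_prod_type, mul_ite, mul_one, mul_zero,
          Finset.sum_ite_eq', Finset.mem_univ, if_true]
      have hconj : W * ((1 : Matrix d₁ d₁ ℂ) ⊗ₖ Q) * star W
          = (1 : Matrix d₁ d₁ ℂ) ⊗ₖ (U₂ * Q * star U₂) := by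
        rw [hWdef, hstarW, ← Matrix.mul_kronecker_mul, ← Matrix.mul_kronecker_mul,
          Matrix.mul_one, hU₁u']
      have e2 : Matrix.trace (B * ((1 : Matrix d₁ d₁ ℂ) ⊗ₖ Q))
          = Matrix.trace (ptraceLeft ρ₁₂ * (U₂ * Q * star U₂)) := by
        rw [cyc, hconj, trace_mul_kron_one_left]
      have e3 : Matrix.trace (ptraceLeft ρ₁₂ * (U₂ * Q * star U₂)) = ((mu j : ℝ) : ℂ) := by
        rw [show ptraceLeft ρ₁₂ * (U₂ * Q * star U₂)
            = (ptraceLeft ρ₁₂ * U₂ * Q) * star U₂ by noncomm_ring,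
          Matrix.trace_mul_comm,
          show star U₂ * (ptraceLeft ρ₁₂ * U₂ * Q)
            = (star U₂ * ptraceLeft ρ₁₂ * U₂) * Q by noncomm_ring,
          hdiag2, hQ, Matrix.diagonal_mul_diagonal, Matrix.trace_diagonal]
        simp
      rw [← e1, e2, e3]
    have amar1 : ∀ i : d₁, ∑ j : d₂, (∑ k, r k * c k (i, j)) = lam i := by
      intro i
      have h := key1 i
      rw [Finset.sum_congr rfl (fun j _ => hBqq (i, j)), ← Complex.ofReal_sum] at h
      exact_mod_cast h
    have amar2 : ∀ j : d₂, ∑ i : d₁, (∑ k, r k * c k (i, j)) = mu j := by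
      intro j
      have h := key2 j
      rw [Finset.sum_congr rfl (fun i _ => hBqq (i, j)), ← Complex.ofReal_sum] at h
      exact_mod_cast h
    have hrnn : ∀ k, 0 ≤ r k := fun k => hpsd.eigenvalues_nonneg k
    have hlnn : ∀ i, 0 ≤ lam i := fun i => h1psd.eigenvalues_nonneg i
    have hmnn : ∀ j, 0 ≤ mu j := fun j => h2psd.eigenvalues_nonneg j
    have hcnn : ∀ k q, 0 ≤ c k q := fun k q => Complex.normSq_nonneg _
    have hann : ∀ q : d₁ × d₂, 0 ≤ ∑ k, r k * c k q := fun q =>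
      Finset.sum_nonneg fun k _ => mul_nonneg (hrnn k) (hcnn k q)
    have ha_le_lam : ∀ q : d₁ × d₂, (∑ k, r k * c k q) ≤ lam q.1 := by
      intro q
      rw [← amar1 q.1]
      exact Finset.single_le_sum (fun j _ => hann (q.1, j)) (Finset.mem_univ q.2)
    have ha_le_mu : ∀ q : d₁ × d₂, (∑ k, r k * c k q) ≤ mu q.2 := by
      intro q
      rw [← amar2 q.2]
      exact Finset.single_le_sum (fun i _ => hann (i, q.2)) (Finset.mem_univ q.1)
    have hrsum : ∑ k, r k = 1 := by
      have h := trace_eq_sum_eigen ρ₁₂ h12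
      rw [htr, ← Complex.ofReal_sum] at h
      exact_mod_cast h.symm
    have hlamsum : ∑ i, lam i = 1 := by
      have h := trace_eq_sum_eigen (ptraceRight ρ₁₂) h1
      rw [ptraceRight_trace, htr, ← Complex.ofReal_sum] at h
      exact_mod_cast h.symm
    have hmusum : ∑ j, mu j = 1 := by
      have h := trace_eq_sum_eigen (ptraceLeft ρ₁₂) h2
      rw [ptraceLeft_trace, htr, ← Complex.ofReal_sum] at h
      exact_mod_cast h.symm
    have htsum : ∑ q : d₁ × d₂, lam q.1 * mu q.2 = 1 := by
      rw [Fintype.sum_prod_type]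
      simp_rw [← Finset.mul_sum, hmusum, mul_one, hlamsum]
    have hsupp : ∀ k q, lam q.1 * mu q.2 = 0 → r k * c k q = 0 := by
      intro k q h0
      have haq : ∑ k', r k' * c k' q = 0 := by
        rcases mul_eq_zero.mp h0 with hl | hm
        · exact le_antisymm (hl ▸ ha_le_lam q) (hann q)
        · exact le_antisymm (hm ▸ ha_le_mu q) (hann q)
      exact (Finset.sum_eq_zero_iff_of_nonneg
        (fun k' _ => mul_nonneg (hrnn k') (hcnn k' q))).mp haq k (Finset.mem_univ k)
    have KEY := sum_klein r c (fun q : d₁ × d₂ => lam q.1 * mu q.2) hrnn hcnn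
      (fun q => mul_nonneg (hlnn q.1) (hmnn q.2)) hrow hcol hsupp hrsum htsum
    rw [trace_mul_mlog ρ₁₂ h12, trace_mul_mlog _ h1, trace_mul_mlog _ h2]
    refine le_trans (le_of_eq ?_) KEY
    have hT1 : ∑ i, lam i * Real.log (lam i)
        = ∑ i, ∑ j, (∑ k, r k * c k (i, j)) * Real.log (lam i) := by
      refine Finset.sum_congr rfl fun i _ => ?_
      rw [← Finset.sum_mul, amar1 i]
    have hT2 : ∑ j, mu j * Real.log (mu j)
        = ∑ i, ∑ j, (∑ k, r k * c k (i, j)) * Real.log (mu j) := by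
      rw [Finset.sum_comm]
      refine Finset.sum_congr rfl fun j _ => ?_
      rw [← Finset.sum_mul, amar2 j]
    rw [hT1, hT2, ← Finset.sum_add_distrib]
    simp_rw [← Finset.sum_add_distrib]
    have hq : ∀ (i : d₁) (j : d₂), (∑ k, r k * c k (i, j)) * Real.log (lam i)
        + (∑ k, r k * c k (i, j)) * Real.log (mu j)
        = ∑ k, r k * c k (i, j) * Real.log (lam i * mu j) := by
      intro i j
      rw [← mul_add]
      rcases eq_or_lt_of_le (hann (i, j)) with h0 | hpos
      · rw [← h0, zero_mul]
        symm
        refine Finset.sum_eq_zero fun k _ => ?_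
        have hk := (Finset.sum_eq_zero_iff_of_nonneg
          (fun k' _ => mul_nonneg (hrnn k') (hcnn k' (i, j)))).mp h0.symm k (Finset.mem_univ k)
        rw [hk, zero_mul]
      · have hlpos : 0 < lam i := lt_of_lt_of_le hpos (ha_le_lam (i, j))
        have hmpos : 0 < mu j := lt_of_lt_of_le hpos (ha_le_mu (i, j))
        rw [← Real.log_mul (ne_of_gt hlpos) (ne_of_gt hmpos), Finset.sum_mul]
    calc ∑ i, ∑ j, ((∑ k, r k * c k (i, j)) * Real.log (lam i)
            + (∑ k, r k * c k (i, j)) * Real.log (mu j))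
        = ∑ i, ∑ j, ∑ k, r k * c k (i, j) * Real.log (lam i * mu j) :=
          Finset.sum_congr rfl fun i _ => Finset.sum_congr rfl fun j _ => hq i j
      _ = ∑ q : d₁ × d₂, ∑ k, r k * c k q * Real.log (lam q.1 * mu q.2) := by
          rw [Fintype.sum_prod_type]
      _ = ∑ k, ∑ q : d₁ × d₂, r k * c k q * Real.log (lam q.1 * mu q.2) := Finset.sum_comm
  linarith [main]

end
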